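/- Let a < b be real numbers, let g : [a,b] → (0,∞) be a log-convex function with g(a) < g(b), and let μ be the Lebesgue measure on ℝ. Let α₁ ∈ (0,∞) be a solution of the equation b − ((b−a)·ln α − b·ln g(a) + a·ln g(b)) / (ln g(b) − ln g(a)) = α. Then the Sugeno integral satisfies (s)∫_{[a,b]} g dμ ≤ min(α₁, b − a). -/

import Mathlib

open MeasureTheory ENNReal Set

/-- The Sugeno (fuzzy) integral of `f` on `A` with respect to `μ`:
`(s)∫_A f dμ = ⨆ α, min (α, μ (A ∩ {x | f x ≥ α}))`. -/
noncomputable def sugenoIntegral {X : Type*} [MeasurableSpace X] (μ : Measure X)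
    (A : Set X) (f : X → ℝ≥0∞) : ℝ≥0∞ :=
  ⨆ α : ℝ≥0∞, min α (μ (A ∩ {x | α ≤ f x}))

theorem sugenoIntegral_le_of_logConvex_lt_Icc (a b : ℝ) (hab : a < b) (g : ℝ → ℝ)
    (hg_pos : ∀ x ∈ Icc a b, 0 < g x)
    (hg_logconvex : ∀ x ∈ Icc a b, ∀ y ∈ Icc a b, ∀ t ∈ Icc (0:ℝ) 1,
      g (t * x + (1 - t) * y) ≤ g x ^ t * g y ^ (1 - t))
    (hgab : g a < g b) (α₁ : ℝ) (hα₁ : 0 < α₁)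
    (heq : b - ((b - a) * Real.log α₁ - b * Real.log (g a) + a * Real.log (g b)) /
        (Real.log (g b) - Real.log (g a)) = α₁) :
    sugenoIntegral volume (Icc a b) (fun x => ENNReal.ofReal (g x)) ≤
      min (ENNReal.ofReal α₁) (ENNReal.ofReal (b - a)) := by
  set La := Real.log (g a) with hLa
  set Lb := Real.log (g b) with hLb
  have hga : 0 < g a := hg_pos a ⟨le_refl a, hab.le⟩
  have hgb : 0 < g b := hg_pos b ⟨hab.le, le_refl b⟩
  have hL : 0 < Lb - La := sub_pos.2 (Real.log_lt_log hga hgab)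
  have hba : 0 < b - a := sub_pos.2 hab
  have key : ∀ r : ℝ, 0 < r → ∀ x ∈ Icc a b, r ≤ g x →
      ((b - a) * Real.log r - b * La + a * Lb) / (Lb - La) ≤ x := by
    intro r hr x hx hrg
    rw [div_le_iff₀ hL]
    have ht0 : (0:ℝ) ≤ (b - x) / (b - a) := div_nonneg (by linarith [hx.2]) hba.le
    have ht1 : (b - x) / (b - a) ≤ 1 := (div_le_one hba).2 (by linarith [hx.1])
    set t := (b - x) / (b - a) with htdef
    have hxeq : t * a + (1 - t) * b = x := by
      rw [htdef]; field_simp; ring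
    have hgle : g x ≤ g a ^ t * g b ^ (1 - t) := by
      have := hg_logconvex a ⟨le_refl a, hab.le⟩ b ⟨hab.le, le_refl b⟩ t ⟨ht0, ht1⟩
      rwa [hxeq] at this
    have hlog : Real.log r ≤ t * La + (1 - t) * Lb := by
      calc Real.log r ≤ Real.log (g x) := Real.log_le_log hr hrg
        _ ≤ Real.log (g a ^ t * g b ^ (1 - t)) :=
            Real.log_le_log (hg_pos x hx) hgle
        _ = t * La + (1 - t) * Lb := by
            rw [Real.log_mul (by positivity) (by positivity),
              Real.log_rpow hga, Real.log_rpow hgb]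
    have h2 : (b - a) * Real.log r ≤ (b - x) * La + (x - a) * Lb := by
      calc (b - a) * Real.log r ≤ (b - a) * (t * La + (1 - t) * Lb) :=
            mul_le_mul_of_nonneg_left hlog hba.le
        _ = (b - x) * La + (x - a) * Lb := by rw [htdef]; field_simp; ring
    nlinarith [h2]
  refine le_min ?_ ?_
  · refine iSup_le fun α => ?_
    rcases le_or_gt α (ENNReal.ofReal α₁) with h | h
    · exact (min_le_left _ _).trans h
    refine (min_le_right _ _).trans ?_
    rcases eq_or_ne α ⊤ with rfl | hαtop
    · have hempty : Icc a b ∩ {x | (⊤:ℝ≥0∞) ≤ ENNReal.ofReal (g x)} = ∅ := by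
        ext x; simp [top_le_iff, ENNReal.ofReal_ne_top]
      simp [hempty]
    · set r := α.toReal with hrdef
      have hr1 : α₁ < r := by
        rw [hrdef]
        exact (ENNReal.ofReal_lt_iff_lt_toReal hα₁.le hαtop).mp h
      have hrpos : 0 < r := hα₁.trans hr1
      have hsub : Icc a b ∩ {x | α ≤ ENNReal.ofReal (g x)} ⊆
          Icc (((b - a) * Real.log α₁ - b * La + a * Lb) / (Lb - La)) b := by
        rintro x ⟨hx, hxr⟩
        have hrg : r ≤ g x := by
          have := (ENNReal.le_ofReal_iff_toReal_le hαtop (hg_pos x hx).le).mp hxr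
          exact this
        refine ⟨le_trans ?_ (key r hrpos x hx hrg), hx.2⟩
        gcongr
      calc volume (Icc a b ∩ {x | α ≤ ENNReal.ofReal (g x)})
          ≤ volume (Icc (((b - a) * Real.log α₁ - b * La + a * Lb) / (Lb - La)) b) :=
            measure_mono hsub
        _ = ENNReal.ofReal (b - ((b - a) * Real.log α₁ - b * La + a * Lb) / (Lb - La)) :=
            Real.volume_Icc
        _ = ENNReal.ofReal α₁ := by rw [heq]
  · refine iSup_le fun α => (min_le_right _ _).trans ?_
    calc volume (Icc a b ∩ {x | α ≤ ENNReal.ofReal (g x)})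
        ≤ volume (Icc a b) := measure_mono inter_subset_left
      _ = ENNReal.ofReal (b - a) := Real.volume_Icc
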